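/- Let α₁ ∈ ℝ, α₂ > 0, ε > 0 and β ≥ 0. Then the polynomial Q has no real roots. -/
import Mathlib


/-- The quartic `Q(z) = z⁴ + (4z/(β+ε))·[(2+ε)(z²+1) + (α₁ − iα₂)(z²−1)]
+ 2((16−β+3ε)/(β+ε))z² + 1`. -/
noncomputable def Q (a1 a2 e b : ℝ) (z : ℂ) : ℂ :=
  z ^ 4
    + (4 * z / ((b : ℂ) + (e : ℂ)))
        * (((2 : ℂ) + (e : ℂ)) * (z ^ 2 + 1) + ((a1 : ℂ) - Complex.I * (a2 : ℂ)) * (z ^ 2 - 1))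
    + 2 * (((16 : ℂ) - (b : ℂ) + 3 * (e : ℂ)) / ((b : ℂ) + (e : ℂ))) * z ^ 2 + 1

/-- For `α₂ > 0`, `ε > 0`, `β ≥ 0`, the polynomial `Q` has no real roots. -/
theorem stmt_9 (a1 a2 e b : ℝ) (ha2 : 0 < a2) (he : 0 < e) (hb : 0 ≤ b) :
    ∀ x : ℝ, Q a1 a2 e b (x : ℂ) ≠ 0 := by
  intro x hx
  have hD : (0:ℝ) < b + e := by linarith
  have hDc : ((b:ℂ) + (e:ℂ)) ≠ 0 := by
    rw [← Complex.ofReal_add]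
    exact_mod_cast hD.ne'
  unfold Q at hx
  field_simp at hx
  have him := congrArg Complex.im hx
  have hre := congrArg Complex.re hx
  simp [← Complex.ofReal_pow, Complex.add_im, Complex.mul_im, Complex.mul_re, Complex.add_re,
    Complex.ofReal_re, Complex.ofReal_im] at him hre
  rcases him with h | h | h
  · subst h; norm_num at hre; linarith
  · exact absurd h ha2.ne'
  · have hx2 : x ^ 2 = 1 := by linarith
    have : x = 1 ∨ x = -1 := by
      have h2 : (x - 1) * (x + 1) = 0 := by nlinarith
      rcases mul_eq_zero.1 h2 with h2 | h2
      · exact Or.inl (by linarith)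
      · exact Or.inr (by linarith)
    rcases this with h | h <;> subst h <;> nlinarith [hre]
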